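/- Let G be a ℤ-invariant valued abelian group which is maximal. Then for every g ∈ G and every m ∈ ℕ the set Δ_m(g) = {v(g − m·g') : g' ∈ G} admits a maximum; equivalently, the extension G/mG of valued abelian groups is pseudo-complete. -/

import Mathlib

universe u

/-- `v : G → Γ` is a valuation making the abelian group `G` a valued abelian group:
`Γ` is a linear order with greatest element `⊤` (denoted `∞` in the paper), `v` is
surjective, `v g = ⊤` iff `g = 0`, and `v (g - h) ≥ min (v g) (v h)`. -/
structure IsValuedGroup {G Γ : Type*} [AddCommGroup G] [LinearOrder Γ] [OrderTop Γ]
    (v : G → Γ) : Prop where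
  surjective : Function.Surjective v
  eq_top_iff : ∀ g : G, v g = ⊤ ↔ g = 0
  min_le_sub : ∀ g h : G, min (v g) (v h) ≤ v (g - h)

/-- A sequence `a` indexed by a linearly ordered set `I` is pseudo-Cauchy if eventually
`v (a i - a j) < v (a j - a k)` for `i < j < k`. -/
def IsPseudoCauchy {G Γ I : Type*} [AddCommGroup G] [LinearOrder Γ] [LinearOrder I]
    (v : G → Γ) (a : I → G) : Prop :=
  ∃ i₀ : I, ∀ i j k : I, i₀ ≤ i → i < j → j < k → v (a i - a j) < v (a j - a k)

/-- `x` is a pseudo-limit of the sequence `a` if eventually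
`v (a i - x) = v (a i - a j)` for `i < j`. -/
def IsPseudoLimit {G Γ I : Type*} [AddCommGroup G] [LinearOrder Γ] [LinearOrder I]
    (v : G → Γ) (a : I → G) (x : G) : Prop :=
  ∃ i₀ : I, ∀ i j : I, i₀ ≤ i → i < j → v (a i - x) = v (a i - a j)

/-- For subsets `G ⊆ K` of an ambient valued abelian group `(H, v)`, `K` is an immediate
extension of `G` (both regarded as valued groups via restriction of `v`): the nonzero
values of `K` and of `G` coincide, and for every value `γ` of `G` and every `k ∈ K` with
`v k ≥ γ` there is `g ∈ G` with `v g ≥ γ` and `v (k - g) > γ` (i.e. the inclusion induces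
isomorphisms of ribs). -/
def IsImmediateIn {H Γ : Type*} [AddCommGroup H] [LinearOrder Γ] [OrderTop Γ]
    (v : H → Γ) (G K : Set H) : Prop :=
  (∀ k ∈ K, k ≠ 0 → ∃ g ∈ G, g ≠ 0 ∧ v g = v k) ∧
  (∀ γ : Γ, (∃ g ∈ G, g ≠ 0 ∧ v g = γ) →
    ∀ k ∈ K, γ ≤ v k → ∃ g ∈ G, γ ≤ v g ∧ γ < v (k - g))

/-- Relative pseudo-completeness: every pseudo-Cauchy sequence with entries in `G` which
has a pseudo-limit in `K` already has a pseudo-limit in `G` (all inside the ambient valued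
abelian group `(H, v)`). -/
def IsPseudoCompleteIn {H Γ : Type u} [AddCommGroup H] [LinearOrder Γ]
    (v : H → Γ) (G K : Set H) : Prop :=
  ∀ (I : Type u) [LinearOrder I] [WellFoundedLT I] [NoMaxOrder I] [Nonempty I]
    (a : I → H), (∀ i, a i ∈ G) → IsPseudoCauchy v a →
    (∃ x ∈ K, IsPseudoLimit v a x) → ∃ x ∈ G, IsPseudoLimit v a x

/-- A valued abelian group is pseudo-complete if every pseudo-Cauchy sequence in it
admits a pseudo-limit in it. -/
def IsPseudoComplete {G Γ : Type u} [AddCommGroup G] [LinearOrder Γ] (v : G → Γ) : Prop :=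
  ∀ (I : Type u) [LinearOrder I] [WellFoundedLT I] [NoMaxOrder I] [Nonempty I]
    (a : I → G), IsPseudoCauchy v a → ∃ x : G, IsPseudoLimit v a x

/-- The extension `H/G` is maximal: there is no subgroup `K` with `G ⊊ K ⊆ H` such that
`K/G` is immediate. -/
def IsMaximalIn {H Γ : Type u} [AddCommGroup H] [LinearOrder Γ] [OrderTop Γ]
    (v : H → Γ) (G : AddSubgroup H) : Prop :=
  ∀ K : AddSubgroup H, G < K → ¬ IsImmediateIn v (G : Set H) (K : Set H)

/-- A valued abelian group `(G, v)` is maximal if it admits no proper immediate extension: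
whenever `(H, w)` is a valued abelian group (with the same value set, as immediate extensions
preserve the skeleton) and `f : G →+ H` is an injective valuation-preserving homomorphism
making `H` an immediate extension of the image of `G`, then `f` is surjective. -/
def IsMaximal {G Γ : Type u} [AddCommGroup G] [LinearOrder Γ] [OrderTop Γ]
    (v : G → Γ) : Prop :=
  ∀ (H : Type u) (_ : AddCommGroup H) (w : H → Γ), IsValuedGroup w →
    ∀ f : G →+ H, Function.Injective f → (∀ g : G, w (f g) = v g) →
      IsImmediateIn w (Set.range f) Set.univ → Function.Surjective f

section A
variable {G Γ : Type u} [AddCommGroup G] [LinearOrder Γ] [OrderTop Γ] {v : G → Γ}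

lemma v_zero (hv : IsValuedGroup v) : v 0 = ⊤ := (hv.eq_top_iff 0).2 rfl

lemma v_neg (hv : IsValuedGroup v) (x : G) : v (-x) = v x := by
  have h1 : ∀ y : G, v y ≤ v (-y) := by
    intro y
    have := hv.min_le_sub 0 y
    simpa [v_zero hv] using this
  exact le_antisymm (by simpa using h1 (-x)) (h1 x)

lemma v_sub_comm (hv : IsValuedGroup v) (x y : G) : v (x - y) = v (y - x) := by
  rw [← v_neg hv (x - y), neg_sub]

lemma min_le_v_add (hv : IsValuedGroup v) (x y : G) : min (v x) (v y) ≤ v (x + y) := by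
  have := hv.min_le_sub x (-y)
  simpa [v_neg hv, sub_neg_eq_add] using this

lemma v_add_eq (hv : IsValuedGroup v) {x y : G} (h : v x < v y) : v (x + y) = v x := by
  refine le_antisymm ?_ (by simpa [h.le] using min_le_v_add hv x y)
  by_contra hlt
  push_neg at hlt
  have h2 : min (v (x + y)) (v y) ≤ v x := by
    have := hv.min_le_sub (x + y) y
    simpa using this
  rcases min_le_iff.1 h2 with h3 | h3
  · exact absurd h3 (not_le.2 hlt)
  · exact absurd h3 (not_le.2 h)

lemma v_zsmul (hv : IsValuedGroup v)
    (hinv : ∀ (g : G) (n : ℕ), 0 < n → v (n • g) = v g)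
    {k : ℤ} (hk : k ≠ 0) (x : G) : v (k • x) = v x := by
  rcases lt_trichotomy k 0 with h | h | h
  · have hk' : 0 < (-k).toNat := by omega
    have hc : ((-k).toNat : ℤ) = -k := by omega
    have : k • x = -(((-k).toNat : ℕ) • x) := by
      rw [← natCast_zsmul, hc, neg_smul, neg_neg]
    rw [this, v_neg hv, hinv _ _ hk']
  · exact absurd h hk
  · have hk' : 0 < k.toNat := by omega
    have hc : (k.toNat : ℤ) = k := by omega
    have : k • x = (k.toNat : ℕ) • x := by
      rw [← natCast_zsmul, hc]
    rw [this, hinv _ _ hk']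

set_option maxHeartbeats 2000000 in
lemma part1 (hv : IsValuedGroup v)
    (hinv : ∀ (g : G) (n : ℕ), 0 < n → v (n • g) = v g)
    (hmax : IsMaximal v) (g : G) (m : ℕ) :
    ∃ δ : Γ, IsGreatest {δ' : Γ | ∃ g' : G, v (g - m • g') = δ'} δ := by
  classical
  by_contra hno
  push_neg at hno
  set Δ : Set Γ := {δ' : Γ | ∃ g' : G, v (g - m • g') = δ'} with hΔdef
  have hmem : v g ∈ Δ := ⟨0, by simp⟩
  have hcof : ∀ δ ∈ Δ, ∃ ε ∈ Δ, δ < ε := by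
    intro δ hδ
    by_contra hub
    push_neg at hub
    exact hno δ ⟨hδ, fun ε hε => hub ε hε⟩
  have hmaxΔ : ∀ a ∈ Δ, ∀ b ∈ Δ, max a b ∈ Δ := by
    intro a ha b hb
    rcases le_total a b with h | h
    · rwa [max_eq_right h]
    · rwa [max_eq_left h]
  rcases Nat.eq_zero_or_pos m with hm0 | hm
  · obtain ⟨ε, hε, hlt⟩ := hcof _ hmem
    obtain ⟨g', hg'⟩ := hε
    rw [hm0] at hg'
    simp only [zero_smul, sub_zero] at hg'
    rw [← hg'] at hlt
    exact lt_irrefl _ hlt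
  have hmZ : (m : ℤ) ≠ 0 := by exact_mod_cast hm.ne'
  -- choice of approximants
  have hch : ∀ δ, δ ∈ Δ → ∃ x : G, v (g - (m : ℤ) • x) = δ := by
    intro δ hδ
    obtain ⟨g', hg'⟩ := hδ
    exact ⟨g', by rwa [natCast_zsmul]⟩
  choose G'0 hG'0 using hch
  set G' : Γ → G := fun δ => if h : δ ∈ Δ then G'0 δ h else 0 with hG'def
  have hG' : ∀ δ ∈ Δ, v (g - (m : ℤ) • G' δ) = δ := by
    intro δ hδ
    simp only [hG'def, dif_pos hδ]
    exact hG'0 δ hδ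
  have hK2' : ∀ δ ∈ Δ, ∀ ε ∈ Δ, δ < ε → v (G' δ - G' ε) = δ := by
    intro δ hδ ε hε hlt
    have h1 : (m : ℤ) • (G' δ - G' ε) = -(g - (m:ℤ) • G' δ) + (g - (m:ℤ) • G' ε) := by
      rw [smul_sub]; abel
    have h2 : v ((m:ℤ) • (G' δ - G' ε)) = δ := by
      rw [h1, v_add_eq hv (by rw [v_neg hv, hG' δ hδ, hG' ε hε]; exact hlt), v_neg hv, hG' δ hδ]
    rwa [v_zsmul hv hinv hmZ] at h2
  have hK2 : ∀ δ ∈ Δ, ∀ ε ∈ Δ, δ < ε → ∀ k : ℤ, k ≠ 0 → v (k • G' δ - k • G' ε) = δ := by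
    intro δ hδ ε hε hlt k hk
    rw [← smul_sub, v_zsmul hv hinv hk, hK2' δ hδ ε hε hlt]
  -- least n with a pseudolimit
  have hPex : ∃ n : ℕ, 0 < n ∧ ∃ z : G, ∀ δ ∈ Δ, δ ≤ v ((n : ℤ) • G' δ - z) := by
    refine ⟨m, hm, g, fun δ hδ => ?_⟩
    rw [show (m:ℤ) • G' δ - g = -(g - (m:ℤ) • G' δ) by abel, v_neg hv, hG' δ hδ]
  set d₀ : ℕ := Nat.find hPex with hd₀def
  have hd₀P := Nat.find_spec hPex
  have hd₀pos : 0 < d₀ := hd₀P.1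
  obtain ⟨z₀, hz₀⟩ := hd₀P.2
  have hd₀Z : (0:ℤ) < (d₀ : ℤ) := by exact_mod_cast hd₀pos
  have hmin : ∀ n : ℕ, 0 < n → n < d₀ → ∀ z : G, ∃ δ ∈ Δ, v ((n : ℤ) • G' δ - z) < δ := by
    intro n hn hnd z
    have h := Nat.find_min hPex hnd
    push_neg at h
    obtain ⟨δ, hδ, hlt⟩ := h hn z
    exact ⟨δ, hδ, hlt⟩
  have hPL : ∀ δ ∈ Δ, v ((d₀:ℤ) • G' δ - z₀) = δ := by
    intro δ hδ
    refine le_antisymm ?_ (hz₀ δ hδ)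
    by_contra hlt
    push_neg at hlt
    obtain ⟨ε, hε, hde⟩ := hcof δ hδ
    have h1 : v ((d₀:ℤ) • G' δ - (d₀:ℤ) • G' ε) = δ := hK2 δ hδ ε hε hde _ hd₀Z.ne'
    have h2 := hv.min_le_sub ((d₀:ℤ) • G' δ - z₀) ((d₀:ℤ) • G' ε - z₀)
    rw [show ((d₀:ℤ) • G' δ - z₀) - ((d₀:ℤ) • G' ε - z₀) = (d₀:ℤ) • G' δ - (d₀:ℤ) • G' ε by abel,
      h1] at h2
    rcases min_le_iff.1 h2 with h3 | h3
    · exact absurd h3 (not_le.2 hlt)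
    · exact absurd (le_trans (hz₀ ε hε) h3) (not_le.2 hde)
  have hd₀ne1 : d₀ ≠ 1 := by
    intro h1
    have hz : ∀ δ ∈ Δ, v (G' δ - z₀) = δ := by
      intro δ hδ
      have := hPL δ hδ
      rwa [h1, Nat.cast_one, one_smul] at this
    have key : ∀ δ ∈ Δ, δ < v (g - (m:ℤ) • z₀) := by
      intro δ hδ
      obtain ⟨ε, hε, hlt⟩ := hcof δ hδ
      have h2 : v ((m:ℤ) • G' ε - (m:ℤ) • z₀) = ε := by
        rw [← smul_sub, v_zsmul hv hinv hmZ, hz ε hε]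
      have h3 := min_le_v_add hv (g - (m:ℤ) • G' ε) ((m:ℤ) • G' ε - (m:ℤ) • z₀)
      rw [show (g - (m:ℤ) • G' ε) + ((m:ℤ) • G' ε - (m:ℤ) • z₀) = g - (m:ℤ) • z₀ by abel,
        hG' ε hε, h2, min_self] at h3
      exact lt_of_lt_of_le hlt h3
    have hmem2 : v (g - (m:ℤ) • z₀) ∈ Δ := ⟨z₀, by rw [natCast_zsmul]⟩
    exact lt_irrefl _ (key _ hmem2)
  have hd₀2 : 2 ≤ d₀ := by omega
  -- stability
  have hSTAB : ∀ (h : G) (n : ℤ), 0 < n → n < (d₀:ℤ) →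
      ∃ γ : Γ, ∃ δ₁ ∈ Δ, γ < δ₁ ∧ ∀ δ ∈ Δ, δ₁ ≤ δ → v (h + n • G' δ) = γ := by
    intro h n hn hnd
    have hnn : (n.toNat : ℤ) = n := by omega
    obtain ⟨δ₁, hδ₁, hlt⟩ := hmin n.toNat (by omega) (by omega) (-h)
    rw [hnn, sub_neg_eq_add] at hlt
    refine ⟨v (h + n • G' δ₁), δ₁, hδ₁, by rwa [add_comm h] , fun δ hδ hle => ?_⟩
    rcases eq_or_lt_of_le hle with rfl | hlt'
    · rfl
    have h2 : v (n • G' δ - n • G' δ₁) = δ₁ := by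
      rw [v_sub_comm hv]; exact hK2 δ₁ hδ₁ δ hδ hlt' n hn.ne'
    have h3 := v_add_eq hv (x := h + n • G' δ₁) (y := n • G' δ - n • G' δ₁)
      (by rw [h2, add_comm h]; exact hlt)
    rw [show (h + n • G' δ₁) + (n • G' δ - n • G' δ₁) = h + n • G' δ by abel] at h3
    rw [h3, add_comm h]
  -- The immediate extension: adjoin t with d₀ • t = z₀
  set gen : G × ℤ := (-z₀, (d₀:ℤ)) with hgen
  set N : AddSubgroup (G × ℤ) := AddSubgroup.zmultiples gen with hN
  have hgenmem : ∀ k : ℤ, k • gen = (-(k • z₀), k * (d₀:ℤ)) := by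
    intro k
    simp [hgen, Prod.smul_mk, smul_neg, zsmul_eq_mul]
  set c : G × ℤ → G × ℤ := fun p => (p.1 + (p.2 / (d₀:ℤ)) • z₀, p.2 % (d₀:ℤ)) with hc
  have c_canon : ∀ p : G × ℤ, 0 ≤ (c p).2 ∧ (c p).2 < (d₀:ℤ) :=
    fun p => ⟨Int.emod_nonneg _ hd₀Z.ne', Int.emod_lt_of_pos _ hd₀Z⟩
  have c_fix : ∀ p : G × ℤ, 0 ≤ p.2 → p.2 < (d₀:ℤ) → c p = p := by
    intro p h0 h1
    rw [hc]
    have e1 : p.2 / (d₀:ℤ) = 0 := Int.ediv_eq_zero_of_lt h0 h1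
    have e2 : p.2 % (d₀:ℤ) = p.2 := Int.emod_eq_of_lt h0 h1
    simp [e1, e2]
  have c_shift : ∀ (p : G × ℤ) (k : ℤ), c (p + k • gen) = c p := by
    intro p k
    rw [hgenmem k]
    apply Prod.ext
    · show (p.1 + -(k • z₀)) + ((p.2 + k * (d₀:ℤ)) / (d₀:ℤ)) • z₀ = p.1 + (p.2 / (d₀:ℤ)) • z₀
      rw [Int.add_mul_ediv_right _ _ hd₀Z.ne', add_smul]
      abel
    · show (p.2 + k * (d₀:ℤ)) % (d₀:ℤ) = p.2 % (d₀:ℤ)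
      exact Int.add_mul_emod_self_right _ _ _
  have mk_c : ∀ p : G × ℤ, (QuotientAddGroup.mk (c p) : (G × ℤ) ⧸ N) = QuotientAddGroup.mk p := by
    intro p
    rw [QuotientAddGroup.eq]
    refine AddSubgroup.mem_zmultiples_iff.2 ⟨p.2 / (d₀:ℤ), ?_⟩
    rw [hgenmem]
    apply Prod.ext
    · show -((p.2 / (d₀:ℤ)) • z₀) = -(p.1 + (p.2 / (d₀:ℤ)) • z₀) + p.1
      abel
    · show (p.2 / (d₀:ℤ)) * (d₀:ℤ) = -(p.2 % (d₀:ℤ)) + p.2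
      rw [Int.emod_def]
      ring
  have hEv_uniq : ∀ (p : G × ℤ) (γ γ' : Γ),
      (∃ δ₁ ∈ Δ, ∀ δ ∈ Δ, δ₁ ≤ δ → v (p.1 + p.2 • G' δ) = γ) →
      (∃ δ₁ ∈ Δ, ∀ δ ∈ Δ, δ₁ ≤ δ → v (p.1 + p.2 • G' δ) = γ') → γ = γ' := by
    rintro p γ γ' ⟨a, ha, h1⟩ ⟨b, hb, h2⟩
    have hm' := hmaxΔ a ha b hb
    rw [← h1 (max a b) hm' (le_max_left _ _), ← h2 (max a b) hm' (le_max_right _ _)]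
  have hWex : ∀ p : G × ℤ, 0 ≤ p.2 → p.2 < (d₀:ℤ) →
      ∃ γ : Γ, (∃ δ₁ ∈ Δ, ∀ δ ∈ Δ, δ₁ ≤ δ → v (p.1 + p.2 • G' δ) = γ) ∧ (p.2 = 0 → γ = v p.1) ∧
        (p.2 ≠ 0 → ∃ δ₁ ∈ Δ, γ < δ₁ ∧ ∀ δ ∈ Δ, δ₁ ≤ δ → v (p.1 + p.2 • G' δ) = γ) := by
    intro p h0 h1
    rcases eq_or_lt_of_le h0 with h2 | h2
    · refine ⟨v p.1, ⟨v g, hmem, fun δ hδ _ => ?_⟩, fun _ => rfl, fun hne => absurd h2.symm hne⟩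
      rw [← h2, zero_smul, add_zero]
    · obtain ⟨γ, δ₁, hδ₁, hγ, hev⟩ := hSTAB p.1 p.2 h2 h1
      exact ⟨γ, ⟨δ₁, hδ₁, hev⟩, fun h => absurd h (by omega), fun _ => ⟨δ₁, hδ₁, hγ, hev⟩⟩
  set W : G × ℤ → Γ :=
    fun p => if hp : 0 ≤ p.2 ∧ p.2 < (d₀:ℤ) then (hWex p hp.1 hp.2).choose else ⊤ with hW
  have hWspec : ∀ (p : G × ℤ), 0 ≤ p.2 → p.2 < (d₀:ℤ) →
      (∃ δ₁ ∈ Δ, ∀ δ ∈ Δ, δ₁ ≤ δ → v (p.1 + p.2 • G' δ) = W p) ∧ (p.2 = 0 → W p = v p.1) ∧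
        (p.2 ≠ 0 → ∃ δ₁ ∈ Δ, W p < δ₁ ∧ ∀ δ ∈ Δ, δ₁ ≤ δ → v (p.1 + p.2 • G' δ) = W p) := by
    intro p h0 h1
    have : W p = (hWex p h0 h1).choose := by rw [hW]; simp only [dif_pos (And.intro h0 h1)]
    rw [this]
    exact (hWex p h0 h1).choose_spec
  set w : (G × ℤ) ⧸ N → Γ := fun x => Quotient.liftOn' x (fun p => W (c p)) (by
    intro a b hab
    rw [QuotientAddGroup.leftRel_apply] at hab
    obtain ⟨k, hk⟩ := AddSubgroup.mem_zmultiples_iff.1 hab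
    have hb : b = a + k • gen := by rw [hk]; abel
    show W (c a) = W (c b)
    rw [hb, c_shift]) with hw
  have wmk : ∀ p : G × ℤ, w (QuotientAddGroup.mk p) = W (c p) := fun p => rfl
  have wrep : ∀ x : (G × ℤ) ⧸ N, ∃ p : G × ℤ,
      0 ≤ p.2 ∧ p.2 < (d₀:ℤ) ∧ x = QuotientAddGroup.mk p ∧ w x = W p := by
    intro x
    obtain ⟨u, rfl⟩ := QuotientAddGroup.mk_surjective x
    exact ⟨c u, (c_canon u).1, (c_canon u).2, (mk_c u).symm, wmk u⟩
  have hNmem : ∀ p : G × ℤ, p ∈ N ↔ ∃ k : ℤ, -(k • z₀) = p.1 ∧ k * (d₀:ℤ) = p.2 := by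
    intro p
    rw [hN, AddSubgroup.mem_zmultiples_iff]
    constructor
    · rintro ⟨k, hk⟩
      rw [hgenmem] at hk
      exact ⟨k, congrArg Prod.fst hk, congrArg Prod.snd hk⟩
    · rintro ⟨k, h1, h2⟩
      exact ⟨k, by rw [hgenmem]; exact Prod.ext h1 h2⟩
  have hdvd_small : ∀ n : ℤ, -(d₀:ℤ) < n → n < (d₀:ℤ) → (d₀:ℤ) ∣ n → n = 0 := by
    rintro n h1 h2 ⟨t, ht⟩
    rcases lt_trichotomy t 0 with h | h | h
    · nlinarith
    · simp [ht, h]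
    · nlinarith
  have hmkzero : ∀ p : G × ℤ, 0 ≤ p.2 → p.2 < (d₀:ℤ) →
      ((QuotientAddGroup.mk p : (G × ℤ) ⧸ N) = 0 ↔ p.1 = 0 ∧ p.2 = 0) := by
    intro p h0 h1
    rw [QuotientAddGroup.eq_zero_iff, hNmem]
    constructor
    · rintro ⟨k, hk1, hk2⟩
      have hp2 : p.2 = 0 := hdvd_small p.2 (by omega) h1 ⟨k, by rw [← hk2]; ring⟩
      have hk0 : k = 0 := by
        rcases mul_eq_zero.1 (hk2.trans hp2) with h | h
        · exact h
        · exact absurd h hd₀Z.ne'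
      exact ⟨by rw [← hk1, hk0, zero_smul, neg_zero], hp2⟩
    · rintro ⟨ha, hb⟩
      exact ⟨0, by simp [ha, hb]⟩
  have hWtop : ∀ p : G × ℤ, 0 ≤ p.2 → p.2 < (d₀:ℤ) →
      (W p = ⊤ ↔ ((QuotientAddGroup.mk p : (G × ℤ) ⧸ N) = 0)) := by
    intro p h0 h1
    obtain ⟨hEvW, hW0, hWne⟩ := hWspec p h0 h1
    rcases eq_or_ne p.2 0 with h2 | h2
    · rw [hmkzero p h0 h1, hW0 h2]
      simp [hv.eq_top_iff, h2]
    · obtain ⟨δ₁, hδ₁, hlt, _⟩ := hWne h2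
      constructor
      · intro h
        exact absurd (h ▸ hlt) (not_lt.2 le_top)
      · intro h
        exact absurd ((hmkzero p h0 h1).1 h).2 h2
  have hwIVG : IsValuedGroup w := by
    constructor
    · intro γ
      obtain ⟨x, hx⟩ := hv.surjective γ
      refine ⟨QuotientAddGroup.mk ((x, 0) : G × ℤ), ?_⟩
      rw [wmk, c_fix _ le_rfl hd₀Z, (hWspec ((x,0) : G × ℤ) le_rfl hd₀Z).2.1 rfl]
      exact hx
    · intro x
      obtain ⟨p, h0, h1, rfl, hwx⟩ := wrep x
      rw [hwx]
      exact hWtop p h0 h1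
    · intro x y
      obtain ⟨p, hp0, hp1, rfl, hwp⟩ := wrep x
      obtain ⟨r, hr0, hr1, rfl, hwr⟩ := wrep y
      rw [hwp, hwr]
      have hsubw : w (QuotientAddGroup.mk p - QuotientAddGroup.mk r) = W (c (p - r)) := by
        rw [← QuotientAddGroup.mk_sub, wmk]
      rw [hsubw]
      rcases eq_or_ne p.2 r.2 with he | hne
      · have hpr2 : (p - r).2 = 0 := by
          show p.2 - r.2 = 0
          omega
        have hfix : c (p - r) = p - r := c_fix _ (le_of_eq hpr2.symm) (hpr2 ▸ hd₀Z)
        rw [hfix, (hWspec _ (le_of_eq hpr2.symm) (hpr2 ▸ hd₀Z)).2.1 hpr2]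
        obtain ⟨a, ha, hevp⟩ := (hWspec p hp0 hp1).1
        obtain ⟨b, hb, hevr⟩ := (hWspec r hr0 hr1).1
        have hδ : max a b ∈ Δ := hmaxΔ a ha b hb
        rw [← hevp (max a b) hδ (le_max_left _ _), ← hevr (max a b) hδ (le_max_right _ _)]
        have h4 := hv.min_le_sub (p.1 + p.2 • G' (max a b)) (r.1 + r.2 • G' (max a b))
        rw [show (p.1 + p.2 • G' (max a b)) - (r.1 + r.2 • G' (max a b)) = (p - r).1 by
          show _ = p.1 - r.1
          rw [he]; abel] at h4
        exact h4
      · set s := c (p - r) with hs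
        have hs0 : 0 ≤ s.2 := (c_canon _).1
        have hs1 : s.2 < (d₀:ℤ) := (c_canon _).2
        have hs2 : s.2 ≠ 0 := by
          intro h
          have h' : (p.2 - r.2) % (d₀:ℤ) = 0 := h
          have hd := Int.dvd_of_emod_eq_zero h'
          have := hdvd_small _ (by omega) (by omega) hd
          omega
        have hident : ∀ δ : Γ, s.1 + s.2 • G' δ =
            ((p.1 + p.2 • G' δ) - (r.1 + r.2 • G' δ)) -
              ((p.2 - r.2) / (d₀:ℤ)) • ((d₀:ℤ) • G' δ - z₀) := by
          intro δ
          have h1 : s.1 = (p.1 - r.1) + ((p.2 - r.2) / (d₀:ℤ)) • z₀ := rfl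
          have h2 : s.2 = (p.2 - r.2) - (d₀:ℤ) * ((p.2 - r.2) / (d₀:ℤ)) := by
            show (p.2 - r.2) % (d₀:ℤ) = _
            rw [Int.emod_def]
          rw [h1, h2]
          rw [sub_smul, smul_sub, smul_smul, sub_smul, mul_comm]
          abel
        obtain ⟨a, ha, hevp⟩ := (hWspec p hp0 hp1).1
        obtain ⟨b, hb, hevr⟩ := (hWspec r hr0 hr1).1
        obtain ⟨d, hd, hWslt, hevs⟩ := (hWspec s hs0 hs1).2.2 hs2
        have hδΔ : max a (max b d) ∈ Δ := hmaxΔ a ha _ (hmaxΔ b hb d hd)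
        set δ := max a (max b d) with hδ'
        have hA := hevp δ hδΔ (le_max_left _ _)
        have hB := hevr δ hδΔ (le_trans (le_max_left _ _) (le_max_right _ _))
        have hC := hevs δ hδΔ (le_trans (le_max_right _ _) (le_max_right _ _))
        have hcor : δ ≤ v (((p.2 - r.2) / (d₀:ℤ)) • ((d₀:ℤ) • G' δ - z₀)) := by
          rcases eq_or_ne ((p.2 - r.2) / (d₀:ℤ)) 0 with h | h
          · rw [h, zero_smul, v_zero hv]
            exact le_top
          · rw [v_zsmul hv hinv h, hPL δ hδΔ]
        have hge : min (min (W p) (W r)) δ ≤ W s := by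
          rw [← hC, hident δ]
          refine le_trans ?_ (hv.min_le_sub _ _)
          apply min_le_min _ hcor
          rw [← hA, ← hB]
          exact hv.min_le_sub _ _
        by_contra hcon
        push_neg at hcon
        have h5 : W s < δ := lt_of_lt_of_le hWslt (le_trans (le_max_right _ _) (le_max_right _ _))
        rcases min_le_iff.1 hge with h6 | h6
        · exact absurd h6 (not_le.2 hcon)
        · exact absurd h6 (not_le.2 h5)
  set f : G →+ (G × ℤ) ⧸ N := (QuotientAddGroup.mk' N).comp (AddMonoidHom.inl G ℤ) with hf
  have hfmk : ∀ x : G, f x = QuotientAddGroup.mk ((x, 0) : G × ℤ) := fun x => rfl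
  have hfval : ∀ x : G, w (f x) = v x := by
    intro x
    rw [hfmk, wmk, c_fix _ le_rfl hd₀Z, (hWspec ((x,0) : G × ℤ) le_rfl hd₀Z).2.1 rfl]
  have hfinj : Function.Injective f := by
    rw [injective_iff_map_eq_zero]
    intro x hx
    rw [hfmk] at hx
    exact ((hmkzero ((x,0) : G × ℤ) le_rfl hd₀Z).1 hx).1
  have himm1 : ∀ k ∈ (Set.univ : Set ((G × ℤ) ⧸ N)), k ≠ 0 →
      ∃ g₁ ∈ Set.range f, g₁ ≠ 0 ∧ w g₁ = w k := by
    intro k _ hk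
    obtain ⟨p, h0, h1, rfl, hwk⟩ := wrep k
    rcases eq_or_ne p.2 0 with h2 | h2
    · refine ⟨f p.1, ⟨p.1, rfl⟩, ?_, ?_⟩
      · intro h
        apply hk
        have hp1 : p.1 = 0 := hfinj (by rw [h, map_zero])
        rw [hmkzero p h0 h1]
        exact ⟨hp1, h2⟩
      · rw [hfval, hwk, (hWspec p h0 h1).2.1 h2]
    · obtain ⟨δ₁, hδ₁, hlt, hev⟩ := (hWspec p h0 h1).2.2 h2
      have hval : v (p.1 + p.2 • G' δ₁) = W p := hev δ₁ hδ₁ le_rfl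
      refine ⟨f (p.1 + p.2 • G' δ₁), ⟨_, rfl⟩, ?_, ?_⟩
      · intro h
        have hz : p.1 + p.2 • G' δ₁ = 0 := hfinj (by rw [h, map_zero])
        rw [hz, v_zero hv] at hval
        rw [← hval] at hlt
        exact absurd hlt (not_lt.2 le_top)
      · rw [hfval, hval, hwk]
  have himm2 : ∀ γ : Γ, (∃ g₁ ∈ Set.range f, g₁ ≠ 0 ∧ w g₁ = γ) →
      ∀ k ∈ (Set.univ : Set ((G × ℤ) ⧸ N)), γ ≤ w k →
        ∃ g₁ ∈ Set.range f, γ ≤ w g₁ ∧ γ < w (k - g₁) := by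
    rintro γ ⟨g₁, ⟨a₀, rfl⟩, hne, hval⟩ k _ hγk
    have hγtop : γ < ⊤ := by
      rcases lt_or_eq_of_le (le_top : γ ≤ ⊤) with h | h
      · exact h
      · exact absurd ((hwIVG.eq_top_iff _).1 (hval.trans h)) hne
    obtain ⟨p, h0, h1, rfl, hwk⟩ := wrep k
    rcases eq_or_ne p.2 0 with h2 | h2
    · refine ⟨f p.1, ⟨p.1, rfl⟩, ?_, ?_⟩
      · rw [hfval, ← (hWspec p h0 h1).2.1 h2, ← hwk]
        exact hγk
      · have hp : p = ((p.1, 0) : G × ℤ) := Prod.ext rfl h2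
        have hzero : QuotientAddGroup.mk p - f p.1 = 0 := by
          rw [hfmk, hp, sub_self]
        rw [hzero, (hwIVG.eq_top_iff 0).2 rfl]
        exact hγtop
    · obtain ⟨δ₁, hδ₁, hlt, hev⟩ := (hWspec p h0 h1).2.2 h2
      have hval1 : v (p.1 + p.2 • G' δ₁) = W p := hev δ₁ hδ₁ le_rfl
      refine ⟨f (p.1 + p.2 • G' δ₁), ⟨_, rfl⟩, ?_, ?_⟩
      · rw [hfval, hval1, ← hwk]
        exact hγk
      · have hmk2 : QuotientAddGroup.mk p - f (p.1 + p.2 • G' δ₁) =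
            QuotientAddGroup.mk ((-(p.2 • G' δ₁), p.2) : G × ℤ) := by
          rw [hfmk, ← QuotientAddGroup.mk_sub]
          congr 1
          apply Prod.ext
          · show p.1 - (p.1 + p.2 • G' δ₁) = -(p.2 • G' δ₁)
            abel
          · show p.2 - 0 = p.2
            ring
        rw [hmk2, wmk, c_fix ((-(p.2 • G' δ₁), p.2) : G × ℤ) h0 h1]
        obtain ⟨ε, hε, hltε⟩ := hcof δ₁ hδ₁
        have hEv2 : ∃ δ₂ ∈ Δ, ∀ δ ∈ Δ, δ₂ ≤ δ →
            v ((-(p.2 • G' δ₁), p.2).1 + ((-(p.2 • G' δ₁), p.2) : G × ℤ).2 • G' δ) = δ₁ := by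
          refine ⟨ε, hε, fun δ hδ hle => ?_⟩
          show v (-(p.2 • G' δ₁) + p.2 • G' δ) = δ₁
          rw [show -(p.2 • G' δ₁) + p.2 • G' δ = -(p.2 • G' δ₁ - p.2 • G' δ) by abel,
            v_neg hv, hK2 δ₁ hδ₁ δ hδ (lt_of_lt_of_le hltε hle) p.2 h2]
        have hWeq : W ((-(p.2 • G' δ₁), p.2) : G × ℤ) = δ₁ :=
          hEv_uniq _ _ _ (hWspec ((-(p.2 • G' δ₁), p.2) : G × ℤ) h0 h1).1 hEv2
        rw [hWeq]
        exact lt_of_le_of_lt (hwk ▸ hγk) hlt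
  have hsurj := hmax ((G × ℤ) ⧸ N) inferInstance w hwIVG f hfinj hfval ⟨himm1, himm2⟩
  obtain ⟨a, ha⟩ := hsurj (QuotientAddGroup.mk ((0, 1) : G × ℤ))
  rw [hfmk, QuotientAddGroup.eq] at ha
  obtain ⟨k, hk1, hk2⟩ := (hNmem _).1 ha
  have hk2' : k * (d₀:ℤ) = 1 := by
    have : (-((a, 0) : G × ℤ) + ((0, 1) : G × ℤ)).2 = 1 := rfl
    rw [hk2, this]
  have hdvd : (d₀:ℤ) ∣ 1 := ⟨k, by rw [← hk2']; ring⟩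
  have := Int.le_of_dvd one_pos hdvd
  omega

end A

/-- Let `G` be a ℤ-invariant valued abelian group which is maximal. Then for
every `g ∈ G` and every `m ∈ ℕ` the set `Δ_m(g) = {v (g - m • g') : g' ∈ G}` admits a
maximum; equivalently, the extension `G/mG` of valued abelian groups is pseudo-complete. -/


theorem delta_max_of_maximal {G Γ : Type u} [AddCommGroup G] [LinearOrder Γ] [OrderTop Γ]
    (v : G → Γ) (hv : IsValuedGroup v)
    (hinv : ∀ (g : G) (n : ℕ), 0 < n → v (n • g) = v g)
    (hmax : IsMaximal v) :
    ∀ (g : G) (m : ℕ),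
      (∃ δ : Γ, IsGreatest {δ' : Γ | ∃ g' : G, v (g - m • g') = δ'} δ) ∧
      IsPseudoCompleteIn v {x : G | ∃ y : G, x = m • y} Set.univ := by
  intro g m
  refine ⟨part1 hv hinv hmax g m, ?_⟩
  intro I _ _ _ _ a ha hpc hlim
  obtain ⟨x, -, i₀x, hx⟩ := hlim
  obtain ⟨i₀c, hc⟩ := hpc
  obtain ⟨δ, ⟨y₀, hy₀⟩, hub⟩ := part1 hv hinv hmax x m
  refine ⟨m • y₀, ⟨y₀, rfl⟩, ?_⟩
  obtain ⟨i₁, hi₁⟩ := exists_gt (max i₀x i₀c)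
  refine ⟨i₁, fun i j hi hij => ?_⟩
  have hi0x : i₀x ≤ i := le_trans (le_trans (le_max_left _ _) hi₁.le) hi
  have hi0c : i₀c ≤ i := le_trans (le_trans (le_max_right _ _) hi₁.le) hi
  have hle : ∀ l : I, v (a l - x) ≤ δ := by
    intro l
    refine hub ?_
    obtain ⟨b, hb⟩ := ha l
    exact ⟨b, by rw [← hb]; exact v_sub_comm hv x (a l)⟩
  obtain ⟨j', hj'⟩ := exists_gt i
  obtain ⟨k', hk'⟩ := exists_gt j'
  have hstrict : v (a i - x) < δ := by
    calc v (a i - x) = v (a i - a j') := hx i j' hi0x hj'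
    _ < v (a j' - a k') := hc i j' k' hi0c hj' hk'
    _ = v (a j' - x) := (hx j' k' (le_trans hi0x hj'.le) hk').symm
    _ ≤ δ := hle j'
  have h4 : v (a i - m • y₀) = v (a i - x) := by
    have he : a i - m • y₀ = (a i - x) + (x - m • y₀) := by abel
    rw [he, v_add_eq hv (by rw [hy₀]; exact hstrict)]
  rw [h4, hx i j hi0x hij]
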